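/- Let Φ be a satisfiable 2-CNF with satisfying assignment σ*, let x ∈ V(Φ), and run WalkSAT on Φ. Define Δ*(Φ,x,t) = 1{σ^{(t)} does not satisfy Φ} · Σ_{l ∈ ℒ(Φ,{σ*(x)·x})} 1{σ^{(t)}(l) ≠ σ*(l)}, and let T*(Φ,x) be the least t with Δ*(Φ,x,t) = 0. Then for all 0 ≤ t < T*(Φ,x), the conditional expectation over the algorithm's choices satisfies E[Δ*(Φ,x,t+1) | σ^{(t)}] ≤ Δ*(Φ,x,t); that is, (Δ*(Φ,x,t))_t is a supermartingale up to time T*(Φ,x). -/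

import Mathlib

open Filter

open scoped Classical

/-- A literal is a sign (`true` = positive) together with a variable. -/
abbrev Lit (V : Type) := Bool × V

/-- A 2-clause is a disjunction of two literals. -/
abbrev Clause (V : Type) := Lit V × Lit V

/-- A 2-CNF is a finite list of 2-clauses. -/
abbrev CNF (V : Type) := List (Clause V)

/-- The negation of a literal. -/
def Lit.negate {V : Type} (l : Lit V) : Lit V := (!l.1, l.2)

/-- A literal is satisfied by an assignment if the variable is assigned its sign. -/
def litSat {V : Type} (σ : V → Bool) (l : Lit V) : Prop := σ l.2 = l.1

/-- A clause is satisfied if one of its two literals is. -/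
def clauseSat {V : Type} (σ : V → Bool) (c : Clause V) : Prop := litSat σ c.1 ∨ litSat σ c.2

/-- A 2-CNF is satisfied if all of its clauses are. -/
def cnfSat {V : Type} (σ : V → Bool) (Φ : CNF V) : Prop := ∀ c ∈ Φ, clauseSat σ c

instance {V : Type} (σ : V → Bool) (l : Lit V) : Decidable (litSat σ l) := by
  unfold litSat; infer_instance

instance {V : Type} (σ : V → Bool) (c : Clause V) : Decidable (clauseSat σ c) := by
  unfold clauseSat; infer_instance

instance {V : Type} (σ : V → Bool) (Φ : CNF V) : Decidable (cnfSat σ Φ) := by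
  unfold cnfSat; infer_instance

/-- In a proper 2-CNF, the two literals of each clause have distinct variables. -/
def validCNF {V : Type} (Φ : CNF V) : Prop := ∀ c ∈ Φ, c.1.2 ≠ c.2.2

/-- A set `L` of literals is closed under Unit Clause Propagation on `Φ`:
whenever a clause can be written `¬ l' ∨ l''` with `l' ∈ L`, also `l'' ∈ L`. -/
def ucpClosed {V : Type} (Φ : CNF V) (L : Set (Lit V)) : Prop :=
  ∀ c ∈ Φ, (Lit.negate c.1 ∈ L → c.2 ∈ L) ∧ (Lit.negate c.2 ∈ L → c.1 ∈ L)

/-- `ℒ(Φ, {l})`: the set of literals produced by UCP from `{l}`, i.e. the least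
set containing `l` that is closed under unit clause propagation. -/
def ucpLits {V : Type} (Φ : CNF V) (l : Lit V) : Set (Lit V) :=
  ⋂₀ {L : Set (Lit V) | l ∈ L ∧ ucpClosed Φ L}

/-- `𝒱(Φ, {l})`: the variables underlying `ℒ(Φ, {l})`. -/
def ucpVars {V : Type} (Φ : CNF V) (l : Lit V) : Set V := Prod.snd '' ucpLits Φ l

/-! ### WalkSAT -/

/-- Flip the value of variable `v` in assignment `σ`. -/
def flipVar {V : Type} [DecidableEq V] (σ : V → Bool) (v : V) : V → Bool :=
  fun u => if u = v then !σ u else σ u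

/-- The list of clauses of `Φ` violated by `σ`. -/
def violated {V : Type} (Φ : CNF V) (σ : V → Bool) : List (Clause V) :=
  Φ.filter fun c => decide (¬ clauseSat σ c)

/-- One step of WalkSAT, driven by a random seed `s`.  If `σ` violates some clause,
then a violated clause is selected via `s.1 % (number of violated clauses)`
(this is a uniformly random violated clause, since `s.1` is uniform on
`Fin (Φ.length)!` and the number of violated clauses divides `(Φ.length)!`),
one of its two literals is selected via the uniform bit `s.2`, and the underlying
variable is flipped.  If `σ` satisfies `Φ`, nothing happens. -/
def wsNext {V : Type} [DecidableEq V] (Φ : CNF V) (s : ℕ × Bool) (σ : V → Bool) : V → Bool :=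
  if h : (violated Φ σ).length = 0 then σ
  else
    let c := (violated Φ σ).get ⟨s.1 % (violated Φ σ).length, Nat.mod_lt _ (Nat.pos_of_ne_zero h)⟩
    flipVar σ (if s.2 then c.1.2 else c.2.2)

/-- The space of random seeds driving one run of WalkSAT on `Φ` (at most
`100 n²` steps, each using an independent uniform pair).  The uniform measure on
this finite space makes each step's clause/literal choices uniform and independent. -/
abbrev wsSeedSpace (V : Type) [Fintype V] (Φ : CNF V) : Type :=
  Fin (100 * (Fintype.card V) ^ 2) → Fin (Nat.factorial Φ.length) × Bool

/-- `σ^{(t)}`: the WalkSAT assignment after `t` steps, starting from the all-true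
assignment, for the realization `ω` of the random seeds.  After `100 n²` steps, or
once `Φ` is satisfied, the assignment no longer changes. -/
def wsState {V : Type} [Fintype V] [DecidableEq V] (Φ : CNF V) (ω : wsSeedSpace V Φ) :
    ℕ → (V → Bool)
  | 0 => fun _ => true
  | t + 1 =>
    if h : t < 100 * (Fintype.card V) ^ 2 then
      wsNext Φ (((ω ⟨t, h⟩).1 : ℕ), (ω ⟨t, h⟩).2) (wsState Φ ω t)
    else wsState Φ ω t

/-- `T(Φ)`: the total number of flips WalkSAT performs, i.e. the first time the
current assignment satisfies `Φ` (capped at the time limit `100 n²`). -/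
noncomputable def wsT {V : Type} [Fintype V] [DecidableEq V] (Φ : CNF V)
    (ω : wsSeedSpace V Φ) : ℕ :=
  sInf ({t | cnfSat (wsState Φ ω t) Φ} ∪ {100 * (Fintype.card V) ^ 2})

/-- `N(Φ, l)`: the total number of times WalkSAT flips variables from `𝒱(Φ,{l})`. -/
noncomputable def wsN {V : Type} [Fintype V] [DecidableEq V] (Φ : CNF V)
    (ω : wsSeedSpace V Φ) (l : Lit V) : ℕ :=
  ∑ v ∈ (Set.toFinite (ucpVars Φ l)).toFinset,
    ∑ t ∈ Finset.Icc 1 (wsT Φ ω),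
      if wsState Φ ω (t - 1) v ≠ wsState Φ ω t v then 1 else 0

/-- Expectation over the random choices of WalkSAT (uniform over all seeds). -/
noncomputable def wsExp {V : Type} [Fintype V] [DecidableEq V] (Φ : CNF V)
    (g : wsSeedSpace V Φ → ℝ) : ℝ :=
  (∑ ω : wsSeedSpace V Φ, g ω) / (Fintype.card (wsSeedSpace V Φ) : ℝ)

/-! ### The random formula `Φ_{n,m}` -/

/-- A sample point for the random 2-CNF: an ordered tuple of `m` clauses on the
variables `x₁, …, xₙ`. -/
abbrev FSpace (n m : ℕ) : Type := Fin m → Clause (Fin n)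

/-- The 2-CNF corresponding to a sample point. -/
def toCNF {n m : ℕ} (f : FSpace n m) : CNF (Fin n) := List.ofFn f

/-- The set of proper sample points: each of the `m` clauses is one of the
`4n(n-1)` 2-clauses on two distinct variables.  The uniform distribution on this
finite set is exactly the distribution of `Φ_{n,m}` (m independent uniform clauses). -/
noncomputable def validFormulas (n m : ℕ) : Finset (FSpace n m) :=
  Finset.univ.filter fun f => ∀ i, (f i).1.2 ≠ (f i).2.2

/-- Probability of an event under the random 2-CNF `Φ_{n,m}`. -/
noncomputable def prF (n m : ℕ) (P : FSpace n m → Prop) : ℝ :=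
  (((validFormulas n m).filter fun f => P f).card : ℝ) / ((validFormulas n m).card : ℝ)

/-- Expectation of a functional of the random 2-CNF `Φ_{n,m}`. -/
noncomputable def expF (n m : ℕ) (g : FSpace n m → ℝ) : ℝ :=
  (∑ f ∈ validFormulas n m, g f) / ((validFormulas n m).card : ℝ)

/-- `X(Φ) = Σ_x (|𝒱(Φ,{x})|² + |𝒱(Φ,{¬x})|²)`. -/
noncomputable def Xval (n : ℕ) (Φ : CNF (Fin n)) : ℝ :=
  ∑ x : Fin n,
    (((ucpVars Φ (true, x)).ncard : ℝ) ^ 2 + ((ucpVars Φ (false, x)).ncard : ℝ) ^ 2)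

/-- `Δ*(Φ,x,t) = 1{σ^{(t)} ⊭ Φ} · Σ_{l ∈ ℒ(Φ,{σ*(x)·x})} 1{σ^{(t)}(l) ≠ σ*(l)}`: the number of
literals of the implication sub-formula of `σ*(x)·x` whose value at time `t` disagrees with their
value under `σ*`, set to `0` once WalkSAT has reached a satisfying assignment. -/
noncomputable def deltaStar {V : Type} [Fintype V] [DecidableEq V] (Φ : CNF V)
    (σstar : V → Bool) (x : V) (ω : wsSeedSpace V Φ) (t : ℕ) : ℝ :=
  (if cnfSat (wsState Φ ω t) Φ then 0 else 1) *
    ({l | l ∈ ucpLits Φ (σstar x, x) ∧ litSat (wsState Φ ω t) l ≠ litSat σstar l}.ncard : ℝ)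

section AuxSup

variable {V : Type} [Fintype V] [DecidableEq V]

lemma propne_iff (a b c : Bool) : ((a = c) ≠ (b = c)) ↔ a ≠ b := by
  rw [ne_eq, ne_eq, eq_iff_iff]
  revert a b c; decide

lemma ucpClosed_ucpLits (Φ : CNF V) (l0 : Lit V) : ucpClosed Φ (ucpLits Φ l0) := by
  intro c hc
  constructor
  · intro h
    rw [ucpLits, Set.mem_sInter] at h ⊢
    exact fun L hL => (hL.2 c hc).1 (h L hL)
  · intro h
    rw [ucpLits, Set.mem_sInter] at h ⊢
    exact fun L hL => (hL.2 c hc).2 (h L hL)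

lemma ucpLits_sat {Φ : CNF V} {σstar : V → Bool} (hsat : cnfSat σstar Φ) (x : V) :
    ∀ l ∈ ucpLits Φ (σstar x, x), litSat σstar l := by
  have : ucpLits Φ (σstar x, x) ⊆ {l | litSat σstar l} := by
    apply Set.sInter_subset_of_mem
    refine ⟨rfl, ?_⟩
    intro c hc
    constructor
    · intro h
      have h1 : ¬ litSat σstar c.1 := by
        simp only [Lit.negate, Set.mem_setOf_eq, litSat] at h ⊢
        rw [h]; simp
      rcases hsat c hc with h' | h'
      · exact absurd h' h1
      · exact h'
    · intro h
      have h1 : ¬ litSat σstar c.2 := by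
        simp only [Lit.negate, Set.mem_setOf_eq, litSat] at h ⊢
        rw [h]; simp
      rcases hsat c hc with h' | h'
      · exact h'
      · exact absurd h' h1
  exact fun l hl => this hl

/-- The mismatch finset. -/
noncomputable def mism (σstar : V → Bool) (L : Set (Lit V)) (σ' : V → Bool) : Finset (Lit V) :=
  Finset.univ.filter (fun l => l ∈ L ∧ litSat σ' l ≠ litSat σstar l)

lemma mem_mism {σstar : V → Bool} {L : Set (Lit V)} {σ' : V → Bool} {l : Lit V} :
    l ∈ mism σstar L σ' ↔ l ∈ L ∧ σ' l.2 ≠ σstar l.2 := by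
  unfold mism
  rw [Finset.mem_filter]
  simp only [Finset.mem_univ, true_and, litSat]
  exact and_congr_right fun _ => propne_iff _ _ _

lemma ncard_eq_mism {σstar : V → Bool} {L : Set (Lit V)} (σ' : V → Bool) :
    ({l | l ∈ L ∧ litSat σ' l ≠ litSat σstar l} : Set (Lit V)).ncard = (mism σstar L σ').card := by
  have : ({l | l ∈ L ∧ litSat σ' l ≠ litSat σstar l} : Set (Lit V)) = ↑(mism σstar L σ') := by
    ext l; simp [mism]
  rw [this, Set.ncard_coe_finset]

variable {σstar : V → Bool} {L : Set (Lit V)}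

lemma flip_subset_insert (hL : ∀ l ∈ L, litSat σstar l) (σ : V → Bool) (v : V) :
    mism σstar L (flipVar σ v) ⊆ insert (σstar v, v) (mism σstar L σ) := by
  intro l hl
  rw [mem_mism] at hl
  obtain ⟨hlL, hne⟩ := hl
  by_cases hv : l.2 = v
  · have hsl := hL l hlL
    have : l = (σstar v, v) := by
      rw [Prod.ext_iff]
      exact ⟨by rw [← hsl, hv], hv⟩
    rw [this]; exact Finset.mem_insert_self _ _
  · apply Finset.mem_insert_of_mem
    rw [mem_mism]
    refine ⟨hlL, ?_⟩
    have : flipVar σ v l.2 = σ l.2 := if_neg hv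
    rwa [this] at hne

lemma flip_subset_self (hL : ∀ l ∈ L, litSat σstar l) {σ : V → Bool} {v : V}
    (hv : (σstar v, v) ∈ L → σ v ≠ σstar v) :
    mism σstar L (flipVar σ v) ⊆ mism σstar L σ := by
  intro l hl
  rw [mem_mism] at hl
  obtain ⟨hlL, hne⟩ := hl
  rw [mem_mism]
  by_cases h : l.2 = v
  · exfalso
    have hsl := hL l hlL
    have hlv : l = (σstar v, v) := by
      rw [Prod.ext_iff]
      exact ⟨by rw [← hsl, h], h⟩
    have hσ : σ v ≠ σstar v := hv (hlv ▸ hlL)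
    have : flipVar σ v l.2 = !σ v := by rw [h]; simp [flipVar]
    rw [this, h] at hne
    cases hb : σ v <;> cases hb' : σstar v <;> simp_all
  · refine ⟨hlL, ?_⟩
    have : flipVar σ v l.2 = σ l.2 := if_neg h
    rwa [this] at hne

lemma flip_card_dec (hL : ∀ l ∈ L, litSat σstar l) {σ : V → Bool} {v : V}
    (h1 : (σstar v, v) ∈ L) (h2 : σ v ≠ σstar v) :
    (mism σstar L (flipVar σ v)).card + 1 ≤ (mism σstar L σ).card := by
  have hmem : (σstar v, v) ∈ mism σstar L σ := by
    rw [mem_mism]; exact ⟨h1, h2⟩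
  have hsub : mism σstar L (flipVar σ v) ⊆ (mism σstar L σ).erase (σstar v, v) := by
    intro l hl
    rw [mem_mism] at hl
    obtain ⟨hlL, hne⟩ := hl
    by_cases h : l.2 = v
    · exfalso
      have hsl := hL l hlL
      have : flipVar σ v l.2 = !σ v := by rw [h]; simp [flipVar]
      rw [this, h] at hne
      cases hb : σ v <;> cases hb' : σstar v <;> simp_all
    · rw [Finset.mem_erase]
      constructor
      · intro heq; exact h (by rw [heq])
      · rw [mem_mism]
        refine ⟨hlL, ?_⟩
        have : flipVar σ v l.2 = σ l.2 := if_neg h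
        rwa [this] at hne
  calc (mism σstar L (flipVar σ v)).card + 1
      ≤ ((mism σstar L σ).erase (σstar v, v)).card + 1 := by
        exact Nat.add_le_add_right (Finset.card_le_card hsub) 1
    _ = (mism σstar L σ).card := Finset.card_erase_add_one hmem

lemma clause_step {Φ : CNF V} (hclosed : ucpClosed Φ L) (hL : ∀ l ∈ L, litSat σstar l)
    {σ : V → Bool} {c : Clause V} (hc : c ∈ Φ) (hcv : ¬ clauseSat σ c)
    (hcs : clauseSat σstar c) :
    (mism σstar L (flipVar σ c.1.2)).card + (mism σstar L (flipVar σ c.2.2)).card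
      ≤ 2 * (mism σstar L σ).card := by
  rw [clauseSat, not_or] at hcv
  obtain ⟨hv1, hv2⟩ := hcv
  rw [litSat] at hv1 hv2
  have hins1 : (mism σstar L (flipVar σ c.1.2)).card ≤ (mism σstar L σ).card + 1 :=
    le_trans (Finset.card_le_card (flip_subset_insert hL σ c.1.2)) (Finset.card_insert_le _ _)
  have hins2 : (mism σstar L (flipVar σ c.2.2)).card ≤ (mism σstar L σ).card + 1 :=
    le_trans (Finset.card_le_card (flip_subset_insert hL σ c.2.2)) (Finset.card_insert_le _ _)
  by_cases h1 : (σstar c.1.2, c.1.2) ∈ L ∧ σ c.1.2 = σstar c.1.2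
  · -- flipping c.1.2 may increase; but then c.2 ∈ L and flipping c.2.2 decreases
    have hneg : Lit.negate c.1 = (σstar c.1.2, c.1.2) := by
      rw [Lit.negate, Prod.ext_iff]
      refine ⟨?_, rfl⟩
      have : c.1.1 ≠ σstar c.1.2 := fun h => hv1 (by rw [h, h1.2])
      cases hb : c.1.1 <;> cases hb' : σstar c.1.2 <;> simp_all
    have hc2L : c.2 ∈ L := (hclosed c hc).1 (by rw [hneg]; exact h1.1)
    have hc2sat := hL _ hc2L
    rw [litSat] at hc2sat
    have h2L : (σstar c.2.2, c.2.2) ∈ L := by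
      have : c.2 = (σstar c.2.2, c.2.2) := by
        rw [Prod.ext_iff]; exact ⟨hc2sat.symm, rfl⟩
      rwa [this] at hc2L
    have h2ne : σ c.2.2 ≠ σstar c.2.2 := by rw [hc2sat]; exact hv2
    have hdec := flip_card_dec hL h2L h2ne
    omega
  by_cases h2 : (σstar c.2.2, c.2.2) ∈ L ∧ σ c.2.2 = σstar c.2.2
  · have hneg : Lit.negate c.2 = (σstar c.2.2, c.2.2) := by
      rw [Lit.negate, Prod.ext_iff]
      refine ⟨?_, rfl⟩
      have : c.2.1 ≠ σstar c.2.2 := fun h => hv2 (by rw [h, h2.2])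
      cases hb : c.2.1 <;> cases hb' : σstar c.2.2 <;> simp_all
    have hc1L : c.1 ∈ L := (hclosed c hc).2 (by rw [hneg]; exact h2.1)
    have hc1sat := hL _ hc1L
    rw [litSat] at hc1sat
    have h1L : (σstar c.1.2, c.1.2) ∈ L := by
      have : c.1 = (σstar c.1.2, c.1.2) := by
        rw [Prod.ext_iff]; exact ⟨hc1sat.symm, rfl⟩
      rwa [this] at hc1L
    have h1ne : σ c.1.2 ≠ σstar c.1.2 := by rw [hc1sat]; exact hv1
    have hdec := flip_card_dec hL h1L h1ne
    omega
  · have b1 := Finset.card_le_card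
      (flip_subset_self hL (σ := σ) (v := c.1.2) (fun hm heq => h1 ⟨hm, heq⟩))
    have b2 := Finset.card_le_card
      (flip_subset_self hL (σ := σ) (v := c.2.2) (fun hm heq => h2 ⟨hm, heq⟩))
    omega

lemma wsNext_eq {Φ : CNF V} {σ : V → Bool} (h : (violated Φ σ).length ≠ 0) (s : ℕ × Bool) :
    wsNext Φ s σ = flipVar σ
      (if s.2 then ((violated Φ σ).get
          ⟨s.1 % (violated Φ σ).length, Nat.mod_lt _ (Nat.pos_of_ne_zero h)⟩).1.2
        else ((violated Φ σ).get
          ⟨s.1 % (violated Φ σ).length, Nat.mod_lt _ (Nat.pos_of_ne_zero h)⟩).2.2) := by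
  unfold wsNext
  rw [dif_neg h]

lemma wsNext_pair {Φ : CNF V} (hΦ : validCNF Φ) (hsat : cnfSat σstar Φ)
    (hclosed : ucpClosed Φ L) (hL : ∀ l ∈ L, litSat σstar l)
    {σ : V → Bool} (hσ : ¬ cnfSat σ Φ) (a1 : ℕ) :
    (mism σstar L (wsNext Φ (a1, true) σ)).card + (mism σstar L (wsNext Φ (a1, false) σ)).card
      ≤ 2 * (mism σstar L σ).card := by
  have hvne : (violated Φ σ).length ≠ 0 := by
    rw [cnfSat] at hσ
    push_neg at hσ
    obtain ⟨c, hc, hcs⟩ := hσ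
    have hmem : c ∈ violated Φ σ := List.mem_filter.2 ⟨hc, by simpa using hcs⟩
    intro hlen
    rw [List.length_eq_zero_iff] at hlen
    rw [hlen] at hmem
    exact absurd hmem List.not_mem_nil
  set c := (violated Φ σ).get
      ⟨a1 % (violated Φ σ).length, Nat.mod_lt _ (Nat.pos_of_ne_zero hvne)⟩ with hcdef
  have hcmem : c ∈ violated Φ σ := List.get_mem _ _
  have hcΦ : c ∈ Φ := (List.mem_filter.1 hcmem).1
  have hcv : ¬ clauseSat σ c := by
    have := (List.mem_filter.1 hcmem).2
    simpa using this
  have e1 : wsNext Φ (a1, true) σ = flipVar σ c.1.2 := by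
    rw [wsNext_eq hvne (a1, true)]
    rfl
  have e2 : wsNext Φ (a1, false) σ = flipVar σ c.2.2 := by
    rw [wsNext_eq hvne (a1, false)]
    rfl
  rw [e1, e2]
  exact clause_step hclosed hL hcΦ hcv (hsat c hcΦ)

lemma wsState_congr (Φ : CNF V) (ω ω' : wsSeedSpace V Φ) (t : ℕ)
    (hagree : ∀ s : Fin (100 * (Fintype.card V) ^ 2), (s : ℕ) < t → ω' s = ω s) :
    ∀ u, u ≤ t → wsState Φ ω' u = wsState Φ ω u := by
  intro u
  induction u with
  | zero => intro _; rfl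
  | succ u ih =>
    intro hu
    have hu' : u ≤ t := Nat.le_of_succ_le hu
    show wsState Φ ω' (u + 1) = wsState Φ ω (u + 1)
    by_cases h : u < 100 * (Fintype.card V) ^ 2
    · simp only [wsState]
      rw [dif_pos h, dif_pos h, hagree ⟨u, h⟩ hu, ih hu']
    · simp only [wsState]
      rw [dif_neg h, dif_neg h, ih hu']

end AuxSup

/-- **The supermartingale property (2.8).** Let `Φ` be a satisfiable 2-CNF with satisfying
assignment `σ*` and let `x` be a variable.  For every time `t` before `T*(Φ,x)` (the first time
with `Δ*(Φ,x,·) = 0`; `t < T*(Φ,x)` means `Δ*(Φ,x,s) ≠ 0` for all `s ≤ t`) and every realization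
`ω` of WalkSAT's choices, the conditional expectation of `Δ*(Φ,x,t+1)` given the history up to
time `t` (the average over all seeds agreeing with `ω` on the first `t` steps, which determines
`σ^{(t)}`) is at most `Δ*(Φ,x,t)`. -/
theorem stmt_13 {V : Type} [Fintype V] [DecidableEq V] (Φ : CNF V) (hΦ : validCNF Φ)
    (σstar : V → Bool) (hsat : cnfSat σstar Φ) (x : V) (ω : wsSeedSpace V Φ) (t : ℕ)
    (ht : ∀ s ≤ t, deltaStar Φ σstar x ω s ≠ 0) :
    (∑ ω' ∈ Finset.univ.filter
        (fun ω' : wsSeedSpace V Φ =>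
          ∀ s : Fin (100 * (Fintype.card V) ^ 2), (s : ℕ) < t → ω' s = ω s),
        deltaStar Φ σstar x ω' (t + 1)) /
      ((Finset.univ.filter
        (fun ω' : wsSeedSpace V Φ =>
          ∀ s : Fin (100 * (Fintype.card V) ^ 2), (s : ℕ) < t → ω' s = ω s)).card : ℝ) ≤
      deltaStar Φ σstar x ω t := by
  classical
  set L := ucpLits Φ (σstar x, x) with hLdef
  have hL : ∀ l ∈ L, litSat σstar l := ucpLits_sat hsat x
  have hclosed : ucpClosed Φ L := ucpClosed_ucpLits Φ _
  have hdelta : ∀ (ω'' : wsSeedSpace V Φ) (t' : ℕ), deltaStar Φ σstar x ω'' t' =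
      (if cnfSat (wsState Φ ω'' t') Φ then 0 else 1) *
        ((mism σstar L (wsState Φ ω'' t')).card : ℝ) := by
    intro ω'' t'
    rw [deltaStar, ncard_eq_mism]
  set σ := wsState Φ ω t with hσdef
  have hnotsat : ¬ cnfSat σ Φ := by
    intro h
    apply ht t le_rfl
    rw [hdelta, ← hσdef, if_pos h, zero_mul]
  have hΔt : deltaStar Φ σstar x ω t = ((mism σstar L σ).card : ℝ) := by
    rw [hdelta, ← hσdef, if_neg hnotsat, one_mul]
  set S := (Finset.univ.filter (fun ω' : wsSeedSpace V Φ =>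
      ∀ s : Fin (100 * (Fintype.card V) ^ 2), (s : ℕ) < t → ω' s = ω s)) with hSdef
  have hωS : ω ∈ S := by
    rw [hSdef, Finset.mem_filter]
    exact ⟨Finset.mem_univ _, fun s _ => rfl⟩
  have hScard : 0 < S.card := Finset.card_pos.2 ⟨ω, hωS⟩
  by_cases hcapt : t < 100 * (Fintype.card V) ^ 2
  · set i : Fin (100 * (Fintype.card V) ^ 2) := ⟨t, hcapt⟩ with hidef
    set K := Nat.factorial Φ.length with hKdef
    set Δ : ℕ := (mism σstar L σ).card with hΔdef
    set gN : Fin K × Bool → ℕ :=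
      fun a => (mism σstar L (wsNext Φ ((a.1 : ℕ), a.2) σ)).card with hgNdef
    have hstep : ∀ ω' ∈ S, deltaStar Φ σstar x ω' (t + 1) ≤ ((gN (ω' i) : ℕ) : ℝ) := by
      intro ω' hω'
      have hag : ∀ s : Fin (100 * (Fintype.card V) ^ 2), (s : ℕ) < t → ω' s = ω s :=
        (Finset.mem_filter.1 hω').2
      have hst : wsState Φ ω' (t + 1) = wsNext Φ (((ω' i).1 : ℕ), (ω' i).2) σ := by
        simp only [wsState]
        rw [dif_pos hcapt, wsState_congr Φ ω ω' t hag t le_rfl]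
      rw [hdelta, hst]
      split_ifs with h
      · rw [zero_mul]; positivity
      · rw [one_mul]
    -- fiber counting
    have hfib : ∀ a b : Fin K × Bool,
        (S.filter fun ω' => ω' i = a).card = (S.filter fun ω' => ω' i = b).card := by
      intro a b
      have hmemmap : ∀ (c d : Fin K × Bool) (ω' : wsSeedSpace V Φ),
          ω' ∈ S.filter (fun ω'' => ω'' i = c) →
          Function.update ω' i d ∈ S.filter (fun ω'' => ω'' i = d) := by
        intro c d ω' hω'
        rw [Finset.mem_filter] at hω' ⊢
        have hS' := (Finset.mem_filter.1 hω'.1).2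
        refine ⟨Finset.mem_filter.2 ⟨Finset.mem_univ _, ?_⟩, Function.update_self _ _ _⟩
        intro s hs
        have hsne : s ≠ i := by
          intro h
          rw [h] at hs
          exact absurd hs (lt_irrefl t)
        rw [Function.update_of_ne hsne]
        exact hS' s hs
      have hinv : ∀ (c d : Fin K × Bool) (ω' : wsSeedSpace V Φ),
          ω' ∈ S.filter (fun ω'' => ω'' i = c) →
          Function.update (Function.update ω' i d) i c = ω' := by
        intro c d ω' hω'
        rw [Function.update_idem]
        have : ω' i = c := (Finset.mem_filter.1 hω').2
        rw [← this, Function.update_eq_self]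
      exact Finset.card_bij' (fun ω' _ => Function.update ω' i b)
        (fun ω' _ => Function.update ω' i a)
        (fun ω' hω' => hmemmap a b ω' hω') (fun ω' hω' => hmemmap b a ω' hω')
        (fun ω' hω' => hinv a b ω' hω') (fun ω' hω' => hinv b a ω' hω')
    obtain ⟨a0⟩ : Nonempty (Fin K × Bool) :=
      ⟨⟨⟨0, Nat.factorial_pos _⟩, true⟩⟩
    set N := (S.filter fun ω' => ω' i = a0).card with hNdef
    have hcards : S.card = ∑ a : Fin K × Bool, (S.filter fun ω' => ω' i = a).card :=
      Finset.card_eq_sum_card_fiberwise (fun ω' _ => Finset.mem_univ (ω' i))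
    have hScard2 : S.card = (K * 2) * N := by
      rw [hcards, Finset.sum_congr rfl (fun a _ => hfib a a0), Finset.sum_const, smul_eq_mul]
      congr 1
      simp [Fintype.card_prod]
    have hsplit : ∑ ω' ∈ S, gN (ω' i)
        = ∑ a : Fin K × Bool, ∑ ω' ∈ S.filter (fun ω' => ω' i = a), gN (ω' i) :=
      (Finset.sum_fiberwise_of_maps_to (fun ω' _ => Finset.mem_univ (ω' i)) _).symm
    have hinner : ∀ a : Fin K × Bool,
        ∑ ω' ∈ S.filter (fun ω' => ω' i = a), gN (ω' i) = N * gN a := by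
      intro a
      rw [Finset.sum_congr rfl (fun ω' hω' => by rw [(Finset.mem_filter.1 hω').2]),
        Finset.sum_const, smul_eq_mul, hfib a a0]
    have hpair : ∀ a1 : Fin K, gN (a1, true) + gN (a1, false) ≤ 2 * Δ := by
      intro a1
      exact wsNext_pair hΦ hsat hclosed hL hnotsat (a1 : ℕ)
    have hsumA : ∑ a : Fin K × Bool, gN a ≤ K * (2 * Δ) := by
      rw [Fintype.sum_prod_type]
      calc ∑ a1 : Fin K, ∑ b : Bool, gN (a1, b)
          ≤ ∑ _a1 : Fin K, 2 * Δ := by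
            apply Finset.sum_le_sum
            intro a1 _
            rw [Fintype.sum_bool]
            exact hpair a1
        _ = K * (2 * Δ) := by rw [Finset.sum_const, smul_eq_mul, Finset.card_univ,
            Fintype.card_fin]
    have hnat : ∑ ω' ∈ S, gN (ω' i) ≤ S.card * Δ := by
      calc ∑ ω' ∈ S, gN (ω' i)
          = ∑ a : Fin K × Bool, N * gN a := by
            rw [hsplit]; exact Finset.sum_congr rfl (fun a _ => hinner a)
        _ = N * ∑ a : Fin K × Bool, gN a := by rw [Finset.mul_sum]
        _ ≤ N * (K * (2 * Δ)) := Nat.mul_le_mul_left _ hsumA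
        _ = ((K * 2) * N) * Δ := by ring
        _ = S.card * Δ := by rw [← hScard2]
    have hfinal : ∑ ω' ∈ S, deltaStar Φ σstar x ω' (t + 1)
        ≤ (S.card : ℝ) * deltaStar Φ σstar x ω t := by
      calc ∑ ω' ∈ S, deltaStar Φ σstar x ω' (t + 1)
          ≤ ∑ ω' ∈ S, ((gN (ω' i) : ℕ) : ℝ) := Finset.sum_le_sum hstep
        _ = ((∑ ω' ∈ S, gN (ω' i) : ℕ) : ℝ) := by rw [Nat.cast_sum]
        _ ≤ ((S.card * Δ : ℕ) : ℝ) := by exact_mod_cast hnat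
        _ = (S.card : ℝ) * deltaStar Φ σstar x ω t := by rw [hΔt]; push_cast; ring
    rw [div_le_iff₀ (by exact_mod_cast hScard)]
    linarith [hfinal]
  · have hS1 : S = {ω} := by
      apply Finset.ext
      intro ω'
      rw [hSdef]
      simp only [Finset.mem_filter, Finset.mem_univ, true_and, Finset.mem_singleton]
      constructor
      · intro h
        funext s
        exact h s (lt_of_lt_of_le s.isLt (not_lt.1 hcapt))
      · intro h s _
        rw [h]
    rw [hS1, Finset.sum_singleton, Finset.card_singleton]
    have hst : wsState Φ ω (t + 1) = wsState Φ ω t := by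
      simp only [wsState]
      rw [dif_neg hcapt]
    have heq : deltaStar Φ σstar x ω (t + 1) = deltaStar Φ σstar x ω t := by
      unfold deltaStar
      rw [hst]
    rw [heq, Nat.cast_one, div_one]
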